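/- For a rank-one operator |x⟩⟨y| ∈ M_m ⊗ M_n, the S(k)-operator norm factorizes as ‖ |x⟩⟨y| ‖_{S(k)} = ‖x‖_{s(k)} · ‖y‖_{s(k)}. In particular, for the maximally entangled state ψ_+ = (1/√n) Σ_i |i⟩⊗|i⟩ in C^n ⊗ C^n, one has ‖ |ψ_+⟩⟨ψ_+| ‖_{S(k)} = k/n. -/

import Mathlib

open scoped BigOperators

noncomputable section

/-- Elementary tensor of two vectors. -/
def tens {m n : ℕ} (a : Fin m → ℂ) (b : Fin n → ℂ) : Fin m × Fin n → ℂ :=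
  fun p => a p.1 * b p.2

/-- Inner product `⟨w|v⟩`, conjugate-linear in the first argument. -/
def ip {ι : Type} [Fintype ι] (w v : ι → ℂ) : ℂ :=
  ∑ i, (starRingEnd ℂ) (w i) * v i

/-- Euclidean norm. -/
def nrm {ι : Type} [Fintype ι] (v : ι → ℂ) : ℝ :=
  Real.sqrt (∑ i, Complex.normSq (v i))

/-- Schmidt rank at most `k`: `v` is a sum of `k` elementary tensors. -/
def SRle {m n : ℕ} (k : ℕ) (v : Fin m × Fin n → ℂ) : Prop :=
  ∃ (a : Fin k → Fin m → ℂ) (b : Fin k → Fin n → ℂ),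
    v = fun p => ∑ l, a l p.1 * b l p.2

/-- The `s(k)`-vector norm. -/
def snorm {m n : ℕ} (k : ℕ) (v : Fin m × Fin n → ℂ) : ℝ :=
  sSup { r : ℝ | ∃ w : Fin m × Fin n → ℂ, nrm w = 1 ∧ SRle k w ∧ r = ‖ip w v‖ }

/-- The `S(k)`-operator norm. -/
def Snorm {m n : ℕ} (k : ℕ) (X : Matrix (Fin m × Fin n) (Fin m × Fin n) ℂ) : ℝ :=
  sSup { r : ℝ | ∃ v w : Fin m × Fin n → ℂ, nrm v = 1 ∧ nrm w = 1 ∧ SRle k v ∧ SRle k w ∧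
    r = ‖ip w (X.mulVec v)‖ }

/-- `k`-block positivity: `⟨v|X|v⟩ ≥ 0` for all unit vectors of Schmidt rank at most `k`. -/
def kBlockPos {m n : ℕ} (k : ℕ) (X : Matrix (Fin m × Fin n) (Fin m × Fin n) ℂ) : Prop :=
  ∀ v : Fin m × Fin n → ℂ, nrm v = 1 → SRle k v → 0 ≤ (ip v (X.mulVec v)).re

/-- The maximally entangled state `ψ_+ = (1/√n) Σ_i |i⟩⊗|i⟩ ∈ ℂ^n ⊗ ℂ^n`. -/
def maxEnt (n : ℕ) : Fin n × Fin n → ℂ :=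
  fun p => if p.1 = p.2 then ((1 / Real.sqrt n : ℝ) : ℂ) else 0

def toE {ι : Type} [Fintype ι] (v : ι → ℂ) : EuclideanSpace ℂ ι :=
  (WithLp.equiv 2 (ι → ℂ)).symm v

lemma ip_eq_inner {ι : Type} [Fintype ι] (w v : ι → ℂ) :
    ip w v = @inner ℂ _ _ (toE w) (toE v) := by
  simp [ip, PiLp.inner_apply, RCLike.inner_apply, toE]
  exact Finset.sum_congr rfl fun i _ => mul_comm _ _

lemma nrm_eq_norm {ι : Type} [Fintype ι] (v : ι → ℂ) : nrm v = ‖toE v‖ := by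
  rw [nrm, EuclideanSpace.norm_eq]
  congr 1
  refine Finset.sum_congr rfl fun i _ => ?_
  simp [toE, Complex.normSq_eq_norm_sq]

lemma abs_ip_le {ι : Type} [Fintype ι] (w v : ι → ℂ) :
    ‖ip w v‖ ≤ nrm w * nrm v := by
  rw [ip_eq_inner, nrm_eq_norm, nrm_eq_norm]
  exact norm_inner_le_norm _ _

lemma ip_conj {ι : Type} [Fintype ι] (w v : ι → ℂ) :
    ip w v = (starRingEnd ℂ) (ip v w) := by
  simp [ip, Finset.sum_comm, mul_comm]

lemma abs_ip_comm {ι : Type} [Fintype ι] (w v : ι → ℂ) :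
    ‖ip w v‖ = ‖ip v w‖ := by
  rw [ip_conj]; exact Complex.norm_conj _

lemma sSup_mul_set {A B : Set ℝ} (hA : A.Nonempty) (hB : B.Nonempty)
    (hAb : BddAbove A) (hBb : BddAbove B)
    (hA0 : ∀ a ∈ A, 0 ≤ a) (hB0 : ∀ b ∈ B, 0 ≤ b) :
    sSup {r : ℝ | ∃ a ∈ A, ∃ b ∈ B, r = a * b} = sSup A * sSup B := by
  obtain ⟨a0, ha0⟩ := hA
  obtain ⟨b0, hb0⟩ := hB
  have hSA : 0 ≤ sSup A := le_trans (hA0 a0 ha0) (le_csSup hAb ha0)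
  have hSB : 0 ≤ sSup B := le_trans (hB0 b0 hb0) (le_csSup hBb hb0)
  have hub : ∀ r ∈ {r : ℝ | ∃ a ∈ A, ∃ b ∈ B, r = a * b}, r ≤ sSup A * sSup B := by
    rintro r ⟨a, ha, b, hb, rfl⟩
    exact mul_le_mul (le_csSup hAb ha) (le_csSup hBb hb) (hB0 b hb) hSA
  have hne : (a0 * b0) ∈ {r : ℝ | ∃ a ∈ A, ∃ b ∈ B, r = a * b} := ⟨a0, ha0, b0, hb0, rfl⟩
  have hbdd : BddAbove {r : ℝ | ∃ a ∈ A, ∃ b ∈ B, r = a * b} := ⟨sSup A * sSup B, hub⟩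
  refine le_antisymm (csSup_le ⟨_, hne⟩ hub) ?_
  set S := sSup {r : ℝ | ∃ a ∈ A, ∃ b ∈ B, r = a * b} with hS
  have hS0 : 0 ≤ S :=
    le_trans (mul_nonneg (hA0 a0 ha0) (hB0 b0 hb0)) (le_csSup hbdd hne)
  have key : ∀ a ∈ A, ∀ b ∈ B, a * b ≤ S := fun a ha b hb =>
    le_csSup hbdd ⟨a, ha, b, hb, rfl⟩
  have h1 : ∀ a ∈ A, a * sSup B ≤ S := by
    intro a ha
    rcases eq_or_lt_of_le (hA0 a ha) with h | h
    · simpa [← h] using hS0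
    · rw [mul_comm, ← le_div_iff₀ h]
      refine csSup_le ⟨b0, hb0⟩ fun b hb => ?_
      rw [le_div_iff₀ h, mul_comm]
      exact key a ha b hb
  rcases eq_or_lt_of_le hSB with h | h
  · simpa [← h] using hS0
  · rw [← le_div_iff₀ h]
    refine csSup_le ⟨a0, ha0⟩ fun a ha => ?_
    rw [le_div_iff₀ h]
    exact h1 a ha

lemma ip_mulVec {m n : ℕ} (x y v w : Fin m × Fin n → ℂ) :
    ip w ((Matrix.vecMulVec x (star y)).mulVec v) = ip w x * ip y v := by
  have h : (Matrix.vecMulVec x (star y)).mulVec v = fun p => x p * ip y v := by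
    funext p
    simp [Matrix.mulVec, Matrix.vecMulVec_apply, dotProduct, ip,
      Finset.mul_sum, mul_assoc, Complex.star_def]
  rw [h]
  simp only [ip, Finset.sum_mul]
  exact Finset.sum_congr rfl fun i _ => by ring

theorem part1 (m n k : ℕ) (x y : Fin m × Fin n → ℂ) :
    Snorm k (Matrix.vecMulVec x (star y)) = snorm k x * snorm k y := by
  set A := { r : ℝ | ∃ w : Fin m × Fin n → ℂ, nrm w = 1 ∧ SRle k w ∧ r = ‖ip w x‖ }
    with hA
  set B := { r : ℝ | ∃ w : Fin m × Fin n → ℂ, nrm w = 1 ∧ SRle k w ∧ r = ‖ip w y‖ }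
    with hB
  have hset : { r : ℝ | ∃ v w : Fin m × Fin n → ℂ, nrm v = 1 ∧ nrm w = 1 ∧ SRle k v ∧ SRle k w ∧
      r = ‖ip w ((Matrix.vecMulVec x (star y)).mulVec v)‖ }
      = {r : ℝ | ∃ a ∈ A, ∃ b ∈ B, r = a * b} := by
    ext r
    constructor
    · rintro ⟨v, w, hv1, hw1, hvk, hwk, rfl⟩
      refine ⟨‖ip w x‖, ⟨w, hw1, hwk, rfl⟩,
        ‖ip v y‖, ⟨v, hv1, hvk, rfl⟩, ?_⟩
      rw [ip_mulVec, norm_mul, abs_ip_comm y v]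
    · rintro ⟨a, ⟨w, hw1, hwk, rfl⟩, b, ⟨v, hv1, hvk, rfl⟩, rfl⟩
      refine ⟨v, w, hv1, hw1, hvk, hwk, ?_⟩
      rw [ip_mulVec, norm_mul, abs_ip_comm y v]
  rw [Snorm, hset, snorm, snorm, ← hA, ← hB]
  by_cases hU : ∃ u : Fin m × Fin n → ℂ, nrm u = 1 ∧ SRle k u
  · obtain ⟨u, hu1, huk⟩ := hU
    have hAub : ∀ r ∈ A, r ≤ nrm x := by
      rintro r ⟨w, hw1, -, rfl⟩
      simpa [hw1] using abs_ip_le w x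
    have hBub : ∀ r ∈ B, r ≤ nrm y := by
      rintro r ⟨w, hw1, -, rfl⟩
      simpa [hw1] using abs_ip_le w y
    exact sSup_mul_set ⟨_, ⟨u, hu1, huk, rfl⟩⟩ ⟨_, ⟨u, hu1, huk, rfl⟩⟩
      ⟨nrm x, hAub⟩ ⟨nrm y, hBub⟩
      (by rintro r ⟨w, -, -, rfl⟩; positivity)
      (by rintro r ⟨w, -, -, rfl⟩; positivity)
  · have hAe : A = ∅ := by
      ext r; simp only [hA, Set.mem_setOf_eq, Set.mem_empty_iff_false, iff_false]
      rintro ⟨w, hw1, hwk, -⟩; exact hU ⟨w, hw1, hwk⟩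
    have hBe : B = ∅ := by
      ext r; simp only [hB, Set.mem_setOf_eq, Set.mem_empty_iff_false, iff_false]
      rintro ⟨w, hw1, hwk, -⟩; exact hU ⟨w, hw1, hwk⟩
    have hCe : {r : ℝ | ∃ a ∈ A, ∃ b ∈ B, r = a * b} = ∅ := by
      ext r; simp [hAe]
    rw [hCe, hAe, hBe]; simp [Real.sSup_empty]

set_option maxHeartbeats 1000000 in
lemma trace_bound {n k : ℕ} (a b : Fin k → Fin n → ℂ) :
    ‖∑ i, ∑ l, a l i * b l i‖
      ≤ Real.sqrt k * nrm (fun p : Fin n × Fin n => ∑ l, a l p.1 * b l p.2) := by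
  classical
  set a' : Fin k → EuclideanSpace ℂ (Fin n) := fun l => toE (a l) with ha'
  set V : Submodule ℂ (EuclideanSpace ℂ (Fin n)) := Submodule.span ℂ (Set.range a') with hV
  set c : Fin n → EuclideanSpace ℂ (Fin n) :=
    fun i => toE (fun p => ∑ l, a l p * b l i) with hc
  have hcV : ∀ i, c i ∈ V := by
    intro i
    have hci : c i = ∑ l, b l i • a' l := by
      ext p
      rw [show (∑ l, b l i • a' l) p = ∑ l, (b l i • a' l) p from by rw [WithLp.ofLp_sum, Finset.sum_apply]]
      show (∑ l, a l p * b l i) = ∑ l, b l i * a l p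
      exact Finset.sum_congr rfl fun l _ => mul_comm _ _
    rw [hci]
    exact Submodule.sum_mem _ fun l _ =>
      Submodule.smul_mem _ _ (Submodule.subset_span (Set.mem_range_self l))
  set cV : Fin n → V := fun i => ⟨c i, hcV i⟩ with hcVdef
  have hcoe : ∀ i, ((cV i : V) : EuclideanSpace ℂ (Fin n)) = c i := fun i => rfl
  set d := Module.finrank ℂ V with hdd
  have hd : d ≤ k := by
    have h1 := finrank_span_le_card (R := ℂ) (Set.range a')
    rw [Set.toFinset_range] at h1
    exact le_trans h1 (le_trans Finset.card_image_le (by simp))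
  set u := stdOrthonormalBasis ℂ V with hu
  set q : Fin d → Fin n → ℂ :=
    fun s i => @inner ℂ _ _ ((u s : EuclideanSpace ℂ (Fin n))) (c i) with hq
  -- column expansion
  have hrepr : ∀ i, c i = ∑ s, q s i • (u s : EuclideanSpace ℂ (Fin n)) := by
    intro i
    have h2 := congrArg (Subtype.val : V → EuclideanSpace ℂ (Fin n)) (u.sum_repr (cV i))
    rw [Submodule.coe_sum] at h2
    simp only [Submodule.coe_smul, OrthonormalBasis.repr_apply_apply,
      Submodule.coe_inner, hcoe] at h2
    exact h2.symm
  -- trace as double sum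
  have htr : (∑ i, ∑ l, a l i * b l i)
      = ∑ i, ∑ s, q s i * (u s : EuclideanSpace ℂ (Fin n)) i := by
    refine Finset.sum_congr rfl fun i _ => ?_
    have e1 : (∑ l, a l i * b l i)
        = @inner ℂ _ _ (EuclideanSpace.single i (1:ℂ)) (c i) := by
      rw [EuclideanSpace.inner_single_left]
      simp [hc, toE]
    rw [e1, hrepr i, inner_sum]
    refine Finset.sum_congr rfl fun s _ => ?_
    rw [inner_smul_right, EuclideanSpace.inner_single_left]
    simp
  -- bound each term
  set X : Fin d → ℝ := fun s => ∑ i, Complex.normSq (q s i) with hX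
  have hX0 : ∀ s, 0 ≤ X s := fun s =>
    Finset.sum_nonneg fun i _ => Complex.normSq_nonneg _
  have hts : ∀ s, ‖∑ i, q s i * (u s : EuclideanSpace ℂ (Fin n)) i‖
      ≤ Real.sqrt (X s) := by
    intro s
    have e2 : (∑ i, q s i * (u s : EuclideanSpace ℂ (Fin n)) i)
        = ip (fun i => (starRingEnd ℂ) (q s i))
            (fun i => (u s : EuclideanSpace ℂ (Fin n)) i) := by
      simp [ip]
    rw [e2]
    have h3 := abs_ip_le (fun i => (starRingEnd ℂ) (q s i))
      (fun i => (u s : EuclideanSpace ℂ (Fin n)) i)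
    have h4 : nrm (fun i => (starRingEnd ℂ) (q s i)) = Real.sqrt (X s) := by
      rw [nrm]; congr 1; exact Finset.sum_congr rfl fun i _ => by simp
    have h5 : nrm (fun i => (u s : EuclideanSpace ℂ (Fin n)) i) = 1 := by
      have he : toE (fun i => (u s : EuclideanSpace ℂ (Fin n)) i)
          = (u s : EuclideanSpace ℂ (Fin n)) := rfl
      rw [nrm_eq_norm, he, ← Submodule.coe_norm]
      exact u.orthonormal.1 s
    rw [h4, h5, mul_one] at h3
    exact h3
  -- Parseval
  have hpar : ∀ i, (∑ s, Complex.normSq (q s i)) = ∑ p, Complex.normSq (c i p) := by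
    intro i
    have h := u.sum_inner_mul_inner (cV i) (cV i)
    simp only [Submodule.coe_inner, hcoe] at h
    have h6 : ∀ s : Fin d,
        (@inner ℂ _ _ (c i) ((u s : EuclideanSpace ℂ (Fin n))))
          * (@inner ℂ _ _ ((u s : EuclideanSpace ℂ (Fin n))) (c i))
        = (Complex.normSq (q s i) : ℂ) := by
      intro s
      simp only [hq]
      rw [← inner_conj_symm (c i) ((u s : EuclideanSpace ℂ (Fin n))), mul_comm,
        Complex.mul_conj]
    rw [Finset.sum_congr rfl (fun s _ => h6 s)] at h
    have h7 : (@inner ℂ _ _ (c i) (c i)) = ∑ p, (Complex.normSq (c i p) : ℂ) := by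
      rw [PiLp.inner_apply]
      refine Finset.sum_congr rfl fun p _ => ?_
      rw [RCLike.inner_apply, Complex.mul_conj]
    rw [h7] at h
    have h8 := congrArg Complex.re h
    simpa using h8
  have hsumX : ∑ s, X s = ∑ P : Fin n × Fin n, Complex.normSq
      ((fun p : Fin n × Fin n => ∑ l, a l p.1 * b l p.2) P) := by
    rw [Finset.sum_comm]
    rw [Fintype.sum_prod_type_right]
    refine Finset.sum_congr rfl fun i _ => ?_
    rw [hpar i]
    refine Finset.sum_congr rfl fun p _ => ?_
    simp [hc, toE]
  -- assemble
  calc ‖∑ i, ∑ l, a l i * b l i‖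
      = ‖∑ s, ∑ i, q s i * (u s : EuclideanSpace ℂ (Fin n)) i‖ := by
        rw [htr, Finset.sum_comm]
    _ ≤ ∑ s, ‖∑ i, q s i * (u s : EuclideanSpace ℂ (Fin n)) i‖ := by
        exact norm_sum_le _ _
    _ ≤ ∑ s, Real.sqrt (X s) := Finset.sum_le_sum fun s _ => hts s
    _ ≤ Real.sqrt k * nrm (fun p : Fin n × Fin n => ∑ l, a l p.1 * b l p.2) := by
        have hsq : (∑ s, Real.sqrt (X s)) ^ 2 ≤ (d : ℝ) * ∑ s, X s := by
          have h9 := sq_sum_le_card_mul_sum_sq (s := (Finset.univ : Finset (Fin d)))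
            (f := fun s => Real.sqrt (X s))
          simpa [Real.sq_sqrt (hX0 _)] using h9
        have h8 : (∑ s, Real.sqrt (X s)) ≤ Real.sqrt ((d : ℝ) * ∑ s, X s) := by
          rw [Real.le_sqrt (Finset.sum_nonneg fun s _ => Real.sqrt_nonneg _)
            (mul_nonneg (Nat.cast_nonneg d) (Finset.sum_nonneg fun s _ => hX0 s))]
          exact hsq
        refine le_trans h8 ?_
        rw [Real.sqrt_mul (Nat.cast_nonneg d), nrm, hsumX]
        exact mul_le_mul_of_nonneg_right
          (Real.sqrt_le_sqrt (by exact_mod_cast hd)) (Real.sqrt_nonneg _)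

-- filter card fact
lemma filter_range_eq (n k : ℕ) (hk : k ≤ n) :
    (Finset.range n).filter (fun j => j < k) = Finset.range k := by
  ext j; simp [Finset.mem_filter]; omega

lemma sum_ite_lt (n k : ℕ) (hk : k ≤ n) (x : ℂ) :
    (∑ i : Fin n, if (i : ℕ) < k then x else 0) = k * x := by
  rw [Fin.sum_univ_eq_sum_range (fun j => if j < k then x else 0)]
  rw [← Finset.sum_filter, filter_range_eq n k hk, Finset.sum_const, Finset.card_range]
  simp [mul_comm]

lemma ip_maxEnt {n k : ℕ} (w : Fin n × Fin n → ℂ) (h1 : nrm w = 1) (hk : SRle k w) :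
    ‖ip w (maxEnt n)‖ ≤ Real.sqrt k / Real.sqrt n := by
  have e1 : ip w (maxEnt n)
      = ((1 / Real.sqrt n : ℝ) : ℂ) * (starRingEnd ℂ) (∑ i, w (i, i)) := by
    rw [ip, Fintype.sum_prod_type, map_sum]
    rw [Finset.mul_sum]
    refine Finset.sum_congr rfl fun i _ => ?_
    rw [Finset.sum_eq_single i]
    · simp [maxEnt, mul_comm]
    · intro j _ hj
      simp [maxEnt, Ne.symm hj]
    · simp
  rw [e1, norm_mul]
  obtain ⟨a, b, hw⟩ := hk
  have e2 : (∑ i, w (i, i)) = ∑ i, ∑ l, a l i * b l i := by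
    refine Finset.sum_congr rfl fun i _ => ?_
    rw [hw]
  have e3 := trace_bound a b
  rw [← hw] at e3
  rw [h1, mul_one] at e3
  have e4 : ‖(starRingEnd ℂ) (∑ i, w (i, i))‖ ≤ Real.sqrt k := by
    rw [Complex.norm_conj, e2]; exact e3
  have e5 : ‖((1 / Real.sqrt n : ℝ) : ℂ)‖ = 1 / Real.sqrt n := by
    rw [Complex.norm_of_nonneg (by positivity)]
  rw [e5]
  calc 1 / Real.sqrt n * ‖(starRingEnd ℂ) (∑ i, w (i, i))‖
      ≤ 1 / Real.sqrt n * Real.sqrt k := by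
        exact mul_le_mul_of_nonneg_left e4 (by positivity)
    _ = Real.sqrt k / Real.sqrt n := by ring

def w0 (n k : ℕ) : Fin n × Fin n → ℂ :=
  fun p => if p.1 = p.2 ∧ (p.1 : ℕ) < k then ((1 / Real.sqrt k : ℝ) : ℂ) else 0

lemma w0_nrm {n k : ℕ} (hk1 : 1 ≤ k) (hkn : k ≤ n) : nrm (w0 n k) = 1 := by
  rw [nrm]
  have : (∑ p : Fin n × Fin n, Complex.normSq (w0 n k p)) = 1 := by
    rw [Fintype.sum_prod_type]
    have hrow : ∀ i : Fin n, (∑ j, Complex.normSq (w0 n k (i, j)))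
        = if (i : ℕ) < k then (1 / k : ℝ) else 0 := by
      intro i
      rw [Finset.sum_eq_single i]
      · by_cases h : (i : ℕ) < k
        · simp only [w0, h, and_true, if_pos rfl, if_pos h, if_true]
          rw [Complex.normSq_ofReal]
          rw [show (1:ℝ)/Real.sqrt k * (1/Real.sqrt k) = 1/(Real.sqrt k * Real.sqrt k) by ring,
            Real.mul_self_sqrt (by positivity)]
        · simp [w0, h]
      · intro j _ hj
        simp [w0, Ne.symm hj]
      · simp
    rw [Finset.sum_congr rfl fun i _ => hrow i]
    have := sum_ite_lt n k hkn ((1 / k : ℝ) : ℂ)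
    -- real version
    rw [Fin.sum_univ_eq_sum_range (fun j => if j < k then (1/k:ℝ) else 0)]
    rw [← Finset.sum_filter, filter_range_eq n k hkn, Finset.sum_const, Finset.card_range]
    rw [nsmul_eq_mul, mul_one_div, div_self (Nat.cast_ne_zero.mpr (by omega))]
  rw [this, Real.sqrt_one]

lemma w0_SRle {n k : ℕ} : SRle k (w0 n k) := by
  classical
  refine ⟨fun l i => if (i : ℕ) = (l : ℕ) then 1 else 0,
    fun l j => if (j : ℕ) = (l : ℕ) then ((1 / Real.sqrt k : ℝ) : ℂ) else 0, ?_⟩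
  funext p
  obtain ⟨i, j⟩ := p
  by_cases h : i = j ∧ (i : ℕ) < k
  · obtain ⟨rfl, hik⟩ := h
    rw [show w0 n k (i, i) = ((1 / Real.sqrt k : ℝ) : ℂ) from if_pos ⟨rfl, hik⟩]
    rw [Finset.sum_eq_single (⟨(i : ℕ), hik⟩ : Fin k)]
    · simp
    · intro l _ hl
      have : (i : ℕ) ≠ (l : ℕ) := by
        intro hh
        exact hl (by apply Fin.ext; simp [← hh])
      simp [this]
    · simp
  · rw [show w0 n k (i, j) = 0 from if_neg h]
    symm
    refine Finset.sum_eq_zero fun l _ => ?_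
    by_cases h1 : (i : ℕ) = (l : ℕ)
    · by_cases h2 : (j : ℕ) = (l : ℕ)
      · exfalso
        exact h ⟨Fin.ext (h1.trans h2.symm), h1 ▸ l.isLt⟩
      · simp [h2]
    · simp [h1]

lemma w0_ip {n k : ℕ} (hk1 : 1 ≤ k) (hkn : k ≤ n) :
    ‖ip (w0 n k) (maxEnt n)‖ = Real.sqrt k / Real.sqrt n := by
  have e1 : ip (w0 n k) (maxEnt n)
      = ((k : ℝ) * (1 / Real.sqrt k) * (1 / Real.sqrt n) : ℝ) := by
    rw [ip, Fintype.sum_prod_type]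
    have hrow : ∀ i : Fin n, (∑ j, (starRingEnd ℂ) (w0 n k (i, j)) * maxEnt n (i, j))
        = if (i : ℕ) < k then (((1 / Real.sqrt k) * (1 / Real.sqrt n) : ℝ) : ℂ) else 0 := by
      intro i
      rw [Finset.sum_eq_single i]
      · by_cases h : (i : ℕ) < k
        · simp only [w0, maxEnt, h, and_true, if_pos rfl, if_pos h, if_true]
          rw [Complex.conj_ofReal]
          push_cast
          ring
        · simp [w0, maxEnt, h]
      · intro j _ hj
        simp [maxEnt, Ne.symm hj]
      · simp
    rw [Finset.sum_congr rfl fun i _ => hrow i]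
    rw [sum_ite_lt n k hkn]
    push_cast
    ring
  rw [e1, Complex.norm_of_nonneg (by positivity)]
  rw [show (k:ℝ) * (1/Real.sqrt k) * (1/Real.sqrt n)
      = ((k:ℝ)/Real.sqrt k) / Real.sqrt n by ring, Real.div_sqrt]

lemma snorm_maxEnt {n k : ℕ} (hk1 : 1 ≤ k) (hkn : k ≤ n) :
    snorm k (maxEnt n) = Real.sqrt k / Real.sqrt n := by
  rw [snorm]
  apply le_antisymm
  · apply csSup_le
    · exact ⟨_, w0 n k, w0_nrm hk1 hkn, w0_SRle, rfl⟩
    · rintro r ⟨w, h1, hsr, rfl⟩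
      exact ip_maxEnt w h1 hsr
  · apply le_csSup
    · refine ⟨Real.sqrt k / Real.sqrt n, ?_⟩
      rintro r ⟨w, h1, hsr, rfl⟩
      exact ip_maxEnt w h1 hsr
    · exact ⟨w0 n k, w0_nrm hk1 hkn, w0_SRle, (w0_ip hk1 hkn).symm⟩

/-- For a rank-one operator `|x⟩⟨y| ∈ M_m ⊗ M_n`, the `S(k)`-norm factorizes
as `‖|x⟩⟨y|‖_{S(k)} = ‖x‖_{s(k)}·‖y‖_{s(k)}`.  In particular, for the maximally entangled
state `ψ_+`, one has `‖|ψ_+⟩⟨ψ_+|‖_{S(k)} = k/n`. -/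
theorem Snorm_rank_one_and_maxEnt :
    (∀ (m n k : ℕ) (x y : Fin m × Fin n → ℂ),
      Snorm k (Matrix.vecMulVec x (star y)) = snorm k x * snorm k y) ∧
    (∀ n k : ℕ, 1 ≤ k → k ≤ n →
      Snorm k (Matrix.vecMulVec (maxEnt n) (star (maxEnt n))) = (k : ℝ) / n) := by
  constructor
  · exact part1
  · intro n k hk1 hkn
    rw [part1, snorm_maxEnt hk1 hkn, div_mul_div_comm,
      Real.mul_self_sqrt (Nat.cast_nonneg k), Real.mul_self_sqrt (Nat.cast_nonneg n)]
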